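/- For any star graph K_{1,n−1} with n ≥ 3 vertices, γ_tc(M(K_{1,n−1})) = 2n − 2. -/

import Mathlib

open SimpleGraph

/-- The middle graph `M(G)`: vertices are `V(G) ⊕ E(G)`; an edge-vertex is adjacent to
another edge-vertex iff the edges are distinct and share an endpoint, and a vertex is
adjacent to an edge iff it is incident to it. -/
def middleGraph {V : Type*} (G : SimpleGraph V) : SimpleGraph (V ⊕ G.edgeSet) where
  Adj x y :=
    match x, y with
    | Sum.inl _, Sum.inl _ => False
    | Sum.inl v, Sum.inr e => v ∈ (e : Sym2 V)
    | Sum.inr e, Sum.inl v => v ∈ (e : Sym2 V)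
    | Sum.inr e, Sum.inr f => e ≠ f ∧ ∃ v, v ∈ (e : Sym2 V) ∧ v ∈ (f : Sym2 V)
  symm := by
    constructor
    rintro (v|e) (w|f) h
    · exact h
    · exact h
    · exact h
    · exact ⟨h.1.symm, h.2.imp fun v hv => ⟨hv.2, hv.1⟩⟩
  loopless := by
    constructor
    rintro (v|e) h
    · exact h
    · exact h.1 rfl

/-- `D` is a total dominating set of `G`: every vertex has a neighbour in `D`. -/
def IsTotalDomSet {V : Type*} (G : SimpleGraph V) (D : Set V) : Prop :=
  ∀ v : V, ∃ u ∈ D, G.Adj v u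

/-- `D` is a total outer-connected dominating set of `G`: it is total dominating and
the subgraph induced on the complement of `D` is connected. -/
def IsTOCDomSet {V : Type*} (G : SimpleGraph V) (D : Set V) : Prop :=
  IsTotalDomSet G D ∧ (G.induce Dᶜ).Connected

/-- The total domination number `γₜ(G)`. -/
noncomputable def totalDomNum {V : Type*} (G : SimpleGraph V) : ℕ :=
  sInf {k | ∃ D : Set V, IsTotalDomSet G D ∧ D.ncard = k}

/-- The total outer-connected domination number `γ_tc(G)`. -/
noncomputable def tocDomNum {V : Type*} (G : SimpleGraph V) : ℕ :=
  sInf {k | ∃ D : Set V, IsTOCDomSet G D ∧ D.ncard = k}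

/-- The set of leaves (vertices of degree 1) of `G`. -/
def leafSet {V : Type*} (G : SimpleGraph V) : Set V :=
  {v | ∃ u, G.neighborSet v = {u}}

/-- The wheel graph with hub `none` and rim cycle on `Fin n`. -/
def wheelGraph (n : ℕ) : SimpleGraph (Option (Fin n)) where
  Adj x y :=
    match x, y with
    | none, none => False
    | none, some _ => True
    | some _, none => True
    | some i, some j => (SimpleGraph.cycleGraph n).Adj i j
  symm := by
    constructor
    rintro (_|i) (_|j) h
    · exact h
    · exact h
    · exact h
    · exact (SimpleGraph.cycleGraph n).adj_symm h
  loopless := by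
    constructor
    rintro (_|i) h
    · exact h
    · exact (SimpleGraph.cycleGraph n).irrefl h

/-- The corona `G ∘ K₁`: to each vertex `a` of `G` (copy `Sum.inl a`) a pendant
vertex `Sum.inr a` is attached. -/
def corona {V : Type*} (G : SimpleGraph V) : SimpleGraph (V ⊕ V) where
  Adj x y :=
    match x, y with
    | Sum.inl a, Sum.inl b => G.Adj a b
    | Sum.inl a, Sum.inr b => a = b
    | Sum.inr a, Sum.inl b => a = b
    | Sum.inr _, Sum.inr _ => False
  symm := by
    constructor
    rintro (a|a) (b|b) h
    · exact G.adj_symm h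
    · exact h.symm
    · exact h.symm
    · exact h
  loopless := by
    constructor
    rintro (a|a) h
    · exact G.irrefl h
    · exact h

/-- The 2-corona `G ∘ P₂`: to each vertex `a` of `G` (copy `Sum.inl a`) a path
`Sum.inl a — Sum.inr (Sum.inl a) — Sum.inr (Sum.inr a)` of length 2 is attached. -/
def corona2 {V : Type*} (G : SimpleGraph V) : SimpleGraph (V ⊕ V ⊕ V) where
  Adj x y :=
    match x, y with
    | Sum.inl a, Sum.inl b => G.Adj a b
    | Sum.inl a, Sum.inr (Sum.inl b) => a = b
    | Sum.inr (Sum.inl a), Sum.inl b => a = b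
    | Sum.inr (Sum.inl a), Sum.inr (Sum.inr b) => a = b
    | Sum.inr (Sum.inr a), Sum.inr (Sum.inl b) => a = b
    | _, _ => False
  symm := by
    constructor
    rintro (a|a|a) (b|b|b) h <;> first | exact G.adj_symm h | exact h.symm | exact h
  loopless := by
    constructor
    rintro (a|a|a) h
    · exact G.irrefl h
    · exact h
    · exact h

/-- The spider `S_{1,n,n}`: hub `none`, middle vertices `some (.inl i)`,
leaves `some (.inr i)`; the star `K_{1,n}` with every edge subdivided once. -/
def spiderGraph (n : ℕ) : SimpleGraph (Option (Fin n ⊕ Fin n)) where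
  Adj x y :=
    match x, y with
    | none, some (Sum.inl _) => True
    | some (Sum.inl _), none => True
    | some (Sum.inl i), some (Sum.inr j) => i = j
    | some (Sum.inr i), some (Sum.inl j) => i = j
    | _, _ => False
  symm := by
    constructor
    rintro (_|i|i) (_|j|j) h <;> first | exact h.symm | exact h
  loopless := by
    constructor
    rintro (_|i|i) h <;> exact h

/-- The friendship graph `Fₙ`: `n` triangles sharing the common vertex `none`. -/
def friendshipGraph (n : ℕ) : SimpleGraph (Option (Fin n × Fin 2)) where
  Adj x y :=
    match x, y with
    | none, some _ => True
    | some _, none => True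
    | some (i, a), some (j, b) => i = j ∧ a ≠ b
    | none, none => False
  symm := by
    constructor
    rintro (_|⟨i,a⟩) (_|⟨j,b⟩) h <;> first | exact ⟨h.1.symm, h.2.symm⟩ | exact h
  loopless := by
    constructor
    rintro (_|⟨i,a⟩) h
    · exact h
    · exact h.2 rfl

section Star
variable (m : ℕ)

private abbrev Gm (m : ℕ) := completeBipartiteGraph (Fin 1) (Fin m)

private def fEdge (j : Fin m) : Sym2 (Fin 1 ⊕ Fin m) := s(Sum.inl 0, Sum.inr j)

lemma fEdge_mem (j : Fin m) : fEdge m j ∈ (Gm m).edgeSet := by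
  simp [fEdge]

lemma fEdge_inj : Function.Injective (fEdge m) := by
  intro j j' h
  simpa [fEdge, Sym2.congr_right] using h

lemma edgeSet_eq : (Gm m).edgeSet = Set.range (fEdge m) := by
  apply Set.Subset.antisymm
  · intro e he
    induction e using Sym2.ind with
    | _ a b =>
      rw [SimpleGraph.mem_edgeSet] at he
      rcases a with a | a <;> rcases b with b | b <;> simp at he
      · exact ⟨b, by rw [fEdge, Subsingleton.elim (0 : Fin 1) a]⟩
      · exact ⟨a, by rw [fEdge, Subsingleton.elim (0 : Fin 1) b, Sym2.eq_swap]⟩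
  · rintro e ⟨j, rfl⟩
    exact fEdge_mem m j

lemma card_total : Nat.card ((Fin 1 ⊕ Fin m) ⊕ (Gm m).edgeSet) = 2 * m + 1 := by
  have : Finite (Gm m).edgeSet := Set.toFinite _
  rw [Nat.card_sum]
  rw [edgeSet_eq, Nat.card_range_of_injective (fEdge_inj m)]
  simp [Nat.card_eq_fintype_card]
  omega

lemma upper (hm : 1 ≤ m) :
    IsTOCDomSet (middleGraph (Gm m)) {Sum.inl (Sum.inr ⟨0, hm⟩)}ᶜ ∧
    ({Sum.inl (Sum.inr ⟨0, hm⟩)}ᶜ :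
      Set ((Fin 1 ⊕ Fin m) ⊕ (Gm m).edgeSet)).ncard = 2 * m := by
  refine ⟨⟨?_, ?_⟩, ?_⟩
  · rintro (v | e)
    · rcases v with a | j
      · refine ⟨Sum.inr ⟨fEdge m ⟨0, hm⟩, fEdge_mem m _⟩, by simp, ?_⟩
        show Sum.inl a ∈ (fEdge m ⟨0, hm⟩ : Sym2 (Fin 1 ⊕ Fin m))
        rw [Subsingleton.elim a 0]
        simp [fEdge]
      · refine ⟨Sum.inr ⟨fEdge m j, fEdge_mem m _⟩, by simp, ?_⟩
        show Sum.inr j ∈ (fEdge m j : Sym2 (Fin 1 ⊕ Fin m))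
        simp [fEdge]
    · refine ⟨Sum.inl (Sum.inl 0), by simp, ?_⟩
      show Sum.inl (0 : Fin 1) ∈ (e : Sym2 (Fin 1 ⊕ Fin m))
      obtain ⟨j, hj⟩ := (Set.ext_iff.mp (edgeSet_eq m) e.1).mp e.2
      rw [← hj]
      simp [fEdge]
  · rw [compl_compl]
    constructor
    intro u v
    rw [Subsingleton.elim u v]
  · have h := Set.ncard_add_ncard_compl
      ({Sum.inl (Sum.inr ⟨0, hm⟩)}ᶜ :
        Set ((Fin 1 ⊕ Fin m) ⊕ (Gm m).edgeSet))
    rw [compl_compl, Set.ncard_singleton, card_total] at h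
    omega

lemma lower (D : Set ((Fin 1 ⊕ Fin m) ⊕ (Gm m).edgeSet))
    (hD : IsTOCDomSet (middleGraph (Gm m)) D) : 2 * m ≤ D.ncard := by
  have hedge : ∀ e : (Gm m).edgeSet, Sum.inr e ∈ D := by
    rintro ⟨e, he⟩
    obtain ⟨j, hj⟩ := (Set.ext_iff.mp (edgeSet_eq m) e).mp he
    obtain ⟨u, huD, hadj⟩ := hD.1 (Sum.inl (Sum.inr j))
    match u with
    | Sum.inl _ => exact absurd hadj (by simp [middleGraph])
    | Sum.inr f =>
      have hmem : Sum.inr j ∈ (f : Sym2 (Fin 1 ⊕ Fin m)) := hadj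
      obtain ⟨j', hj'⟩ := (Set.ext_iff.mp (edgeSet_eq m) f.1).mp f.2
      have hjj : j = j' := by
        rw [← hj'] at hmem
        simpa [fEdge] using hmem
      have : f = ⟨e, he⟩ := Subtype.ext (hj'.symm.trans (by rw [← hjj]; exact hj))
      exact this ▸ huD
  have hsub : (Dᶜ).Subsingleton := by
    intro x hx y hy
    have hxD : (⟨x, hx⟩ : ↥Dᶜ) = ⟨y, hy⟩ := by
      obtain ⟨p⟩ := hD.2.preconnected ⟨x, hx⟩ ⟨y, hy⟩
      cases p with
      | nil => rfl
      | @cons _ z _ h _ =>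
        exfalso
        obtain ⟨a, ha⟩ : ∃ a, x = Sum.inl a := by
          match x with
          | Sum.inl a => exact ⟨a, rfl⟩
          | Sum.inr e => exact absurd (hedge e) hx
        rcases z with ⟨zb | ze, hzc⟩
        · have : (middleGraph (Gm m)).Adj x (Sum.inl zb) := h
          rw [ha] at this
          exact this
        · exact absurd (hedge ze) hzc
    exact congrArg Subtype.val hxD
  have h1 : Dᶜ.ncard ≤ 1 := (Set.ncard_le_one (Set.toFinite _)).mpr fun a ha b hb => hsub ha hb
  have h := Set.ncard_add_ncard_compl D
  rw [card_total] at h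
  omega

end Star

theorem stmt6 (n : ℕ) (hn : 3 ≤ n) :
    tocDomNum (middleGraph (completeBipartiteGraph (Fin 1) (Fin (n - 1)))) = 2 * n - 2 := by
  have hm : 1 ≤ n - 1 := by omega
  obtain ⟨htoc, hcard⟩ := upper (n - 1) hm
  have h2 : 2 * n - 2 = 2 * (n - 1) := by omega
  rw [h2, tocDomNum]
  apply le_antisymm
  · exact Nat.sInf_le ⟨_, htoc, hcard⟩
  · refine le_csInf ⟨2 * (n - 1), _, htoc, hcard⟩ ?_
    rintro k ⟨D, hD, rfl⟩
    exact lower (n - 1) D hD
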